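/- For every integer n ≥ 2, the matrix M_n is congruent over ℚ to a diagonal matrix: there exists an invertible rational (2n−2)×(2n−2) matrix P such that Pᵀ M_n P is the diagonal matrix with diagonal entries, in order: −(k+1)/k for k = 1, 2, …, n−2 (i.e. −2, −3/2, −4/3, …, −(n−1)/(n−2)), then k/(k+1) for k = n−2, n−3, …, 1 (i.e. (n−2)/(n−1), (n−3)/(n−2), …, 1/2), then −1/2, then 2. -/

import Mathlib

/-- The intersection-form matrix `M_n`: the symmetric tridiagonal integer matrix of size
`(2n-2) × (2n-2)` with diagonal `-2, …, -2` (`n-2` times), `0`, `2, …, 2` (`n-1` times)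
and superdiagonal `1, …, 1` (`n-2` times), `-1, …, -1` (`n-1` times). -/
def Mn (n : ℕ) : Matrix (Fin (2 * n - 2)) (Fin (2 * n - 2)) ℤ :=
  Matrix.of fun i j =>
    if (i : ℕ) = (j : ℕ) then
      (if (i : ℕ) < n - 2 then -2 else if (i : ℕ) = n - 2 then 0 else 2)
    else if (i : ℕ) + 1 = (j : ℕ) then (if (i : ℕ) < n - 2 then 1 else -1)
    else if (j : ℕ) + 1 = (i : ℕ) then (if (j : ℕ) < n - 2 then 1 else -1)
    else 0

/-- `M_n` is congruent over `ℚ` to the diagonal matrix with entries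
`-2, -3/2, …, -(n-1)/(n-2)`, then `(n-2)/(n-1), …, 1/2`, then `-1/2`, then `2`. -/
def wQ (m k : ℕ) : ℚ := if k ≤ m then (k : ℚ) + 1 else 2 * (m : ℚ) + 1 - (k : ℚ)
def aQ (m k : ℕ) : ℚ := if k < m then -2 else if k = m then 0 else 2
def bQ (m k : ℕ) : ℚ := if k < m then 1 else -1
def dQ (m j : ℕ) : ℚ :=
  if j < m then -((j : ℚ) + 2) / ((j : ℚ) + 1)
  else (2 * (m : ℚ) - (j : ℚ)) / (2 * (m : ℚ) + 1 - (j : ℚ))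
def Qf (m k j : ℕ) : ℚ :=
  if j = 2 * m + 1 then (if k = 2 * m then -1 else if k = 2 * m + 1 then 2 else 0)
  else if j = 2 * m then (if k = 2 * m then -1 / 2 else 0)
  else if k = j then dQ m j else if k = j + 1 then bQ m j else 0
def pf (m i j : ℕ) : ℚ :=
  if j = 2 * m + 1 then (if i = 2 * m + 1 then 1 else 0)
  else if i = 2 * m + 1 then (if j = 2 * m then 1 / 2 else 0)
  else if i ≤ j then wQ m i / wQ m j else 0
def Df (m i : ℕ) : ℚ :=
  if i < m then -((i : ℚ) + 2) / ((i : ℚ) + 1)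
  else if i < 2 * m then (2 * (m : ℚ) - (i : ℚ)) / (2 * (m : ℚ) + 1 - (i : ℚ))
  else if i = 2 * m then -1 / 2 else 2

def Pm (n : ℕ) : Matrix (Fin (2 * n - 2)) (Fin (2 * n - 2)) ℚ :=
  Matrix.of fun i j => pf (n - 2) (i : ℕ) (j : ℕ)

lemma wQ_le {m k : ℕ} (h : k ≤ m) : wQ m k = (k : ℚ) + 1 := if_pos h

lemma wQ_ge {m k : ℕ} (h : m ≤ k) : wQ m k = 2 * (m : ℚ) + 1 - (k : ℚ) := by
  unfold wQ
  split_ifs with h'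
  · have : k = m := le_antisymm h' h
    subst this; push_cast; ring
  · rfl

lemma wQ_pos {m k : ℕ} (h : k ≤ 2 * m) : 0 < wQ m k := by
  unfold wQ
  split_ifs with h'
  · positivity
  · have hk : (k : ℚ) ≤ 2 * (m : ℚ) := by exact_mod_cast h
    linarith

lemma aQ_lt {m k : ℕ} (h : k < m) : aQ m k = -2 := if_pos h
lemma aQ_eq {m k : ℕ} (h : k = m) : aQ m k = 0 := by
  unfold aQ; rw [if_neg (by omega), if_pos h]
lemma aQ_gt {m k : ℕ} (h : m < k) : aQ m k = 2 := by
  unfold aQ; rw [if_neg (by omega), if_neg (by omega)]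
lemma bQ_lt {m k : ℕ} (h : k < m) : bQ m k = 1 := if_pos h
lemma bQ_ge {m k : ℕ} (h : m ≤ k) : bQ m k = -1 := by
  unfold bQ; rw [if_neg (by omega)]
lemma dQ_lt {m j : ℕ} (h : j < m) : dQ m j = -((j : ℚ) + 2) / ((j : ℚ) + 1) := if_pos h
lemma dQ_ge {m j : ℕ} (h : m ≤ j) :
    dQ m j = (2 * (m : ℚ) - (j : ℚ)) / (2 * (m : ℚ) + 1 - (j : ℚ)) := by
  unfold dQ; rw [if_neg (by omega)]

lemma pf_top {m i j : ℕ} (hj : j = 2 * m + 1) : pf m i j = if i = 2 * m + 1 then 1 else 0 := by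
  unfold pf; rw [if_pos hj]

lemma pf_half {m i j : ℕ} (hi : i = 2 * m + 1) (hj : j = 2 * m) : pf m i j = 1 / 2 := by
  unfold pf; rw [if_neg (by omega), if_pos hi, if_pos hj]

lemma pf_main {m i j : ℕ} (hij : i ≤ j) (hj : j ≤ 2 * m) : pf m i j = wQ m i / wQ m j := by
  unfold pf; rw [if_neg (by omega), if_neg (by omega), if_pos hij]

lemma pf_diag {m j : ℕ} (hj : j ≤ 2 * m) : pf m j j = 1 := by
  rw [pf_main le_rfl hj, div_self (ne_of_gt (wQ_pos hj))]

lemma pf_zero {m i j : ℕ} (hij : j < i) (h2 : ¬(i = 2 * m + 1 ∧ j = 2 * m))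
    (hi : i ≤ 2 * m + 1) : pf m i j = 0 := by
  unfold pf
  split_ifs <;> first | rfl | (exfalso; omega)
lemma master (m N K J : ℕ) (hN : N = 2 * m + 2) (hK : K < N) (hJ : J < N) :
    aQ m K * pf m K J + (if K + 1 < N then bQ m K * pf m (K + 1) J else 0)
      + (if 0 < K then bQ m (K - 1) * pf m (K - 1) J else 0) = Qf m K J := by
  subst hN
  by_cases hJ1 : J = 2 * m + 1
  · -- last column: no divisions anywhere
    simp only [pf_top hJ1]
    unfold Qf aQ bQ
    split_ifs <;> first | (exfalso; omega) | norm_num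
  · -- J ≤ 2m
    have hJ2 : J ≤ 2 * m := by omega
    have hwJ : wQ m J ≠ 0 := ne_of_gt (wQ_pos hJ2)
    rcases lt_trichotomy K J with hKJ | hKJ | hKJ
    · -- K < J : recurrence rows, both sides 0
      have hQf : Qf m K J = 0 := by
        unfold Qf; rw [if_neg hJ1]
        split_ifs <;> first | (exfalso; omega) | rfl
      rw [hQf, if_pos (show K + 1 < 2 * m + 2 by omega),
        pf_main (show K ≤ J by omega) hJ2, pf_main (show K + 1 ≤ J by omega) hJ2]
      by_cases hK0 : K = 0
      · subst hK0
        rw [if_neg (by omega), aQ_lt (show 0 < m by omega), bQ_lt (show 0 < m by omega),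
          wQ_le (show 0 ≤ m by omega), wQ_le (show 1 ≤ m by omega)]
        push_cast
        field_simp
        ring
      · obtain ⟨K', rfl⟩ : ∃ K', K = K' + 1 := ⟨K - 1, by omega⟩
        rw [if_pos (show 0 < K' + 1 by omega)]
        simp only [Nat.add_sub_cancel]
        rw [pf_main (show K' ≤ J by omega) hJ2]
        rcases lt_trichotomy (K' + 1) m with h | h | h
        · rw [aQ_lt h, bQ_lt (show K' + 1 < m by omega), bQ_lt (show K' < m by omega),
            wQ_le (show K' + 1 ≤ m by omega), wQ_le (show K' + 1 + 1 ≤ m by omega),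
            wQ_le (show K' ≤ m by omega)]
          push_cast
          field_simp
          ring
        · subst h
          rw [aQ_eq rfl, bQ_ge (show K' + 1 ≤ K' + 1 by omega),
            bQ_lt (show K' < K' + 1 by omega),
            wQ_le (show K' + 1 ≤ K' + 1 by omega),
            wQ_ge (show K' + 1 ≤ K' + 1 + 1 by omega),
            wQ_le (show K' ≤ K' + 1 by omega)]
          push_cast
          field_simp
          ring
        · rw [aQ_gt h, bQ_ge (show m ≤ K' + 1 by omega), bQ_ge (show m ≤ K' by omega),
            wQ_ge (show m ≤ K' + 1 by omega), wQ_ge (show m ≤ K' + 1 + 1 by omega),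
            wQ_ge (show m ≤ K' by omega)]
          push_cast
          field_simp
          ring
    · -- K = J : pivots
      subst hKJ
      by_cases hJ2m : K = 2 * m
      · subst hJ2m
        have hQf : Qf m (2 * m) (2 * m) = -1 / 2 := by
          unfold Qf; rw [if_neg hJ1, if_pos rfl, if_pos rfl]
        rw [hQf, pf_diag hJ2, if_pos (by omega), pf_half (by omega) (by omega)]
        by_cases hm0 : 0 < 2 * m
        · obtain ⟨m', rfl⟩ : ∃ m', m = m' + 1 := ⟨m - 1, by omega⟩
          rw [if_pos (by omega)]
          have e1 : 2 * (m' + 1) - 1 = 2 * m' + 1 := by omega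
          rw [e1, pf_main (show 2 * m' + 1 ≤ 2 * (m' + 1) by omega) (by omega)]
          have e2 : wQ (m' + 1) (2 * m' + 1) = 2 := by
            rw [wQ_ge (by omega)]; push_cast; ring
          have e3 : wQ (m' + 1) (2 * (m' + 1)) = 1 := by
            rw [wQ_ge (by omega)]; push_cast; ring
          rw [e2, e3, aQ_gt (by omega), bQ_ge (show m' + 1 ≤ 2 * m' + 1 by omega),
            bQ_ge (show m' + 1 ≤ 2 * (m' + 1) by omega)]
          norm_num
        · have hm : m = 0 := by omega
          subst hm
          rw [if_neg (by omega), aQ_eq (by omega), bQ_ge (by omega)]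
          norm_num
      · -- K = J < 2m
        have hQf : Qf m K K = dQ m K := by
          unfold Qf; rw [if_neg hJ1, if_neg hJ2m, if_pos rfl]
        rw [hQf, pf_diag hJ2, if_pos (show K + 1 < 2 * m + 2 by omega),
          pf_zero (show K < K + 1 by omega) (by omega) (by omega)]
        by_cases hJ0 : K = 0
        · subst hJ0
          rw [if_neg (by omega), aQ_lt (show 0 < m by omega), dQ_lt (show 0 < m by omega)]
          norm_num
        · obtain ⟨J', rfl⟩ : ∃ J', K = J' + 1 := ⟨K - 1, by omega⟩
          rw [if_pos (by omega)]
          simp only [Nat.add_sub_cancel]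
          rw [pf_main (show J' ≤ J' + 1 by omega) hJ2]
          rcases lt_trichotomy (J' + 1) m with h | h | h
          · rw [aQ_lt h, bQ_lt (show J' + 1 < m by omega), bQ_lt (show J' < m by omega),
              wQ_le (show J' ≤ m by omega), wQ_le (show J' + 1 ≤ m by omega), dQ_lt h]
            have hne : ((J' : ℚ) + 1) + 1 ≠ 0 := by positivity
            push_cast
            field_simp
            ring
          · subst h
            rw [aQ_eq rfl, bQ_ge (show J' + 1 ≤ J' + 1 by omega),
              bQ_lt (show J' < J' + 1 by omega), wQ_le (show J' ≤ J' + 1 by omega),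
              wQ_le (show J' + 1 ≤ J' + 1 by omega), dQ_ge (show J' + 1 ≤ J' + 1 by omega)]
            have hne : ((J' : ℚ) + 1) + 1 ≠ 0 := by positivity
            have hne3 : 2 * ((J' : ℚ) + 1) - (J' : ℚ) ≠ 0 := by
              have e : 2 * ((J' : ℚ) + 1) - (J' : ℚ) = (J' : ℚ) + 2 := by ring
              rw [e]; positivity
            have hne4 : (2 : ℚ) + (J' : ℚ) ≠ 0 := by positivity
            have hne5 : 2 * ((J' : ℚ) + 1) + 1 - ((J' : ℚ) + 1) ≠ 0 := by
              have e : 2 * ((J' : ℚ) + 1) + 1 - ((J' : ℚ) + 1) = (J' : ℚ) + 2 := by ring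
              rw [e]; positivity
            have hne6 : ((J' : ℚ) + 1) * 2 + 1 - ((J' : ℚ) + 1) ≠ 0 := by
              have e : ((J' : ℚ) + 1) * 2 + 1 - ((J' : ℚ) + 1) = (J' : ℚ) + 2 := by ring
              rw [e]; positivity
            push_cast
            field_simp
            all_goals ring
          · have hc : (J' : ℚ) + 2 ≤ 2 * (m : ℚ) := by
              exact_mod_cast (show J' + 2 ≤ 2 * m by omega)
            have hd1 : 2 * (m : ℚ) + 1 - ((J' : ℚ) + 1) ≠ 0 := by
              intro hcon; linarith
            have hd2 : 2 * (m : ℚ) - (J' : ℚ) ≠ 0 := by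
              intro hcon; linarith
            rw [aQ_gt h, bQ_ge (show m ≤ J' + 1 by omega), bQ_ge (show m ≤ J' by omega),
              wQ_ge (show m ≤ J' by omega), wQ_ge (show m ≤ J' + 1 by omega),
              dQ_ge (show m ≤ J' + 1 by omega)]
            push_cast
            field_simp
            ring
    · -- J < K
      have h1 : J + 1 ≤ K := hKJ
      rcases eq_or_lt_of_le h1 with hK1 | hK2
      · -- K = J + 1
        subst hK1
        by_cases hJ2m : J = 2 * m
        · subst hJ2m
          rw [if_neg (by omega), if_pos (by omega)]
          simp only [Nat.add_sub_cancel]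
          rw [pf_half (by omega) (by omega), pf_diag hJ2, aQ_gt (by omega),
            bQ_ge (show m ≤ 2 * m by omega)]
          have hQf : Qf m (2 * m + 1) (2 * m) = 0 := by
            unfold Qf; rw [if_neg hJ1, if_pos rfl, if_neg (by omega)]
          rw [hQf]
          norm_num
        · rw [if_pos (show J + 1 + 1 < 2 * m + 2 by omega), if_pos (by omega)]
          simp only [Nat.add_sub_cancel]
          rw [pf_zero (show J < J + 1 by omega) (by omega) (by omega),
            pf_zero (show J < J + 1 + 1 by omega) (by omega) (by omega), pf_diag hJ2]
          have hQf : Qf m (J + 1) J = bQ m J := by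
            unfold Qf; rw [if_neg hJ1, if_neg hJ2m, if_neg (by omega), if_pos rfl]
          rw [hQf]
          ring
      · -- K > J + 1 : everything vanishes
        have hQf : Qf m K J = 0 := by
          unfold Qf; rw [if_neg hJ1]
          split_ifs <;> first | (exfalso; omega) | rfl
        have hp1 : pf m K J = 0 := pf_zero (show J < K by omega) (by omega) (by omega)
        rw [hQf, hp1]
        by_cases hKtop : K + 1 < 2 * m + 2
        · rw [if_pos hKtop, if_pos (show 0 < K by omega),
            pf_zero (show J < K + 1 by omega) (by omega) (by omega),
            pf_zero (show J < K - 1 by omega) (by omega) (by omega)]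
          ring
        · rw [if_neg hKtop, if_pos (show 0 < K by omega),
            pf_zero (show J < K - 1 by omega) (by omega) (by omega)]
          ring
lemma sum_spike {N : ℕ} (g : Fin N → ℚ) (c : ℚ) (t : ℕ) :
    (∑ l : Fin N, (if (l : ℕ) = t then c else 0) * g l)
      = if h : t < N then c * g ⟨t, h⟩ else 0 := by
  split_ifs with h
  · rw [Finset.sum_eq_single (⟨t, h⟩ : Fin N)]
    · simp
    · intro l _ hl
      have : (l : ℕ) ≠ t := fun he => hl (Fin.ext he)
      simp [this]
    · intro h'; exact absurd (Finset.mem_univ _) h'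
  · apply Finset.sum_eq_zero
    intro l _
    have : (l : ℕ) ≠ t := by have := l.isLt; omega
    simp [this]

lemma Mentry (n : ℕ) (k l : Fin (2 * n - 2)) :
    ((Mn n).map (Int.cast : ℤ → ℚ)) k l =
      (if (l : ℕ) = (k : ℕ) then aQ (n - 2) (k : ℕ) else 0)
      + (if (l : ℕ) = (k : ℕ) + 1 then bQ (n - 2) (k : ℕ) else 0)
      + (if (l : ℕ) = (k : ℕ) - 1 ∧ (k : ℕ) ≠ 0 then bQ (n - 2) ((k : ℕ) - 1) else 0) := by
  simp only [Mn, Matrix.map_apply, Matrix.of_apply, aQ, bQ]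
  split_ifs <;> push_cast <;> first | (exfalso; omega) | ring | norm_num

lemma tri_sum {n : ℕ} (k : Fin (2 * n - 2)) (g : Fin (2 * n - 2) → ℚ) :
    (∑ l, ((Mn n).map (Int.cast : ℤ → ℚ)) k l * g l)
      = aQ (n - 2) k * g k
        + (if h : (k : ℕ) + 1 < 2 * n - 2 then bQ (n - 2) k * g ⟨(k : ℕ) + 1, h⟩ else 0)
        + (if h : 0 < (k : ℕ) then
            bQ (n - 2) ((k : ℕ) - 1) * g ⟨(k : ℕ) - 1, lt_of_le_of_lt (Nat.sub_le _ _) k.isLt⟩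
           else 0) := by
  have hsplit : ∀ l, ((Mn n).map (Int.cast : ℤ → ℚ)) k l * g l
      = (if (l : ℕ) = (k : ℕ) then aQ (n - 2) (k : ℕ) else 0) * g l
        + (if (l : ℕ) = (k : ℕ) + 1 then bQ (n - 2) (k : ℕ) else 0) * g l
        + (if (l : ℕ) = (k : ℕ) - 1 ∧ (k : ℕ) ≠ 0 then bQ (n - 2) ((k : ℕ) - 1) else 0) * g l := by
    intro l
    rw [Mentry n k l, add_mul, add_mul]
  rw [Finset.sum_congr rfl fun l _ => hsplit l, Finset.sum_add_distrib, Finset.sum_add_distrib]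
  congr 1
  · congr 1
    · rw [sum_spike, dif_pos k.isLt]
    · rw [sum_spike]
  · by_cases hk0 : (k : ℕ) = 0
    · rw [dif_neg (by omega)]
      apply Finset.sum_eq_zero
      intro l _
      rw [if_neg (by omega), zero_mul]
    · have he : ∀ l : Fin (2 * n - 2),
          (if (l : ℕ) = (k : ℕ) - 1 ∧ (k : ℕ) ≠ 0 then bQ (n - 2) ((k : ℕ) - 1) else 0) * g l
          = (if (l : ℕ) = (k : ℕ) - 1 then bQ (n - 2) ((k : ℕ) - 1) else 0) * g l := by
        intro l
        congr 1
        simp [hk0]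
      rw [Finset.sum_congr rfl fun l _ => he l, sum_spike,
        dif_pos (lt_of_le_of_lt (Nat.sub_le _ _) k.isLt), dif_pos (by omega : 0 < (k : ℕ))]

lemma hMP {n : ℕ} (hn : 2 ≤ n) (k j : Fin (2 * n - 2)) :
    ((Mn n).map (Int.cast : ℤ → ℚ) * Pm n) k j = Qf (n - 2) (k : ℕ) (j : ℕ) := by
  rw [Matrix.mul_apply, tri_sum k (fun l => Pm n l j)]
  have h2 : (if h : (k : ℕ) + 1 < 2 * n - 2 then
        bQ (n - 2) k * Pm n ⟨(k : ℕ) + 1, h⟩ j else 0)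
      = (if (k : ℕ) + 1 < 2 * (n - 2) + 2 then
        bQ (n - 2) k * pf (n - 2) ((k : ℕ) + 1) (j : ℕ) else 0) := by
    by_cases h : (k : ℕ) + 1 < 2 * n - 2
    · rw [dif_pos h, if_pos (by omega)]; rfl
    · rw [dif_neg h, if_neg (by omega)]
  have h3 : (if h : 0 < (k : ℕ) then
        bQ (n - 2) ((k : ℕ) - 1) *
          Pm n ⟨(k : ℕ) - 1, lt_of_le_of_lt (Nat.sub_le _ _) k.isLt⟩ j else 0)
      = (if 0 < (k : ℕ) then
        bQ (n - 2) ((k : ℕ) - 1) * pf (n - 2) ((k : ℕ) - 1) (j : ℕ) else 0) := by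
    split_ifs with h
    · rfl
    · rfl
  rw [h2, h3, show Pm n k j = pf (n - 2) (k : ℕ) (j : ℕ) from rfl]
  exact master (n - 2) (2 * (n - 2) + 2) (k : ℕ) (j : ℕ) rfl (by have := k.isLt; omega)
    (by have := j.isLt; omega)
lemma master2 (m I J : ℕ) (hI : I < 2 * m + 2) (hJ : J < 2 * m + 2) :
    (if J = 2 * m + 1 then (-1) * pf m (2 * m) I + 2 * pf m (2 * m + 1) I
     else if J = 2 * m then (-1 / 2) * pf m (2 * m) I
     else dQ m J * pf m J I + bQ m J * pf m (J + 1) I)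
    = if I = J then Df m I else 0 := by
  by_cases hJ1 : J = 2 * m + 1
  · rw [if_pos hJ1]
    rcases lt_trichotomy I (2 * m) with h | h | h
    · rw [pf_zero (show I < 2 * m by omega) (by omega) (by omega),
        pf_zero (show I < 2 * m + 1 by omega) (by omega) (by omega), if_neg (by omega)]
      ring
    · subst h
      rw [pf_diag (le_refl (2 * m)), pf_half rfl rfl, if_neg (by omega)]
      norm_num
    · have hI1 : I = 2 * m + 1 := by omega
      subst hI1
      rw [pf_top rfl, pf_top rfl, if_neg (by omega), if_pos rfl,
        if_pos (show 2 * m + 1 = J by omega)]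
      have : Df m (2 * m + 1) = 2 := by
        unfold Df
        rw [if_neg (by omega), if_neg (by omega), if_neg (by omega)]
      rw [this]
      norm_num
  · rw [if_neg hJ1]
    by_cases hJ2 : J = 2 * m
    · rw [if_pos hJ2]
      rcases lt_trichotomy I (2 * m) with h | h | h
      · rw [pf_zero (show I < 2 * m by omega) (by omega) (by omega), if_neg (by omega)]
        ring
      · subst h
        rw [pf_diag (le_refl (2 * m)), if_pos (by omega)]
        have : Df m (2 * m) = -1 / 2 := by
          unfold Df
          by_cases hm0 : m = 0
          · subst hm0; norm_num
          · rw [if_neg (by omega), if_neg (by omega), if_pos rfl]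
        rw [this]
        norm_num
      · have hI1 : I = 2 * m + 1 := by omega
        subst hI1
        rw [pf_top rfl, if_neg (by omega), if_neg (by omega)]
        ring
    · have hJlt : J < 2 * m := by omega
      have hJle : J ≤ 2 * m := by omega
      rw [if_neg hJ2]
      rcases lt_trichotomy I J with h | h | h
      · rw [pf_zero (show I < J by omega) (by omega) (by omega),
          pf_zero (show I < J + 1 by omega) (by omega) (by omega), if_neg (by omega)]
        ring
      · subst h
        rw [pf_diag hJle, pf_zero (show I < I + 1 by omega) (by omega) (by omega), if_pos rfl]
        have : Df m I = dQ m I := by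
          unfold Df dQ
          split_ifs <;> first | rfl | (exfalso; omega)
        rw [this]
        ring
      · rcases (show I ≤ 2 * m ∨ I = 2 * m + 1 by omega) with hI2 | hI2
        · rw [pf_main (show J ≤ I by omega) hI2, pf_main (show J + 1 ≤ I by omega) hI2,
            if_neg (by omega)]
          have hwI : wQ m I ≠ 0 := ne_of_gt (wQ_pos hI2)
          rcases lt_or_ge J m with hm | hm
          · rw [dQ_lt hm, bQ_lt hm, wQ_le (show J ≤ m by omega),
              wQ_le (show J + 1 ≤ m by omega)]
            have hJ0 : ((J : ℚ) + 1) ≠ 0 := by positivity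
            push_cast
            field_simp
            ring
          · rw [dQ_ge (show m ≤ J by omega), bQ_ge (show m ≤ J by omega),
              wQ_ge (show m ≤ J by omega), wQ_ge (show m ≤ J + 1 by omega)]
            have hc : (J : ℚ) + 1 ≤ 2 * (m : ℚ) := by
              exact_mod_cast (show J + 1 ≤ 2 * m by omega)
            have hd : 2 * (m : ℚ) + 1 - (J : ℚ) ≠ 0 := by intro hcon; linarith
            push_cast
            field_simp
            ring
        · subst hI2
          rw [pf_top rfl, pf_top rfl, if_neg hJ1, if_neg (show ¬(J + 1 = 2 * m + 1) by omega),
            if_neg (show ¬(2 * m + 1 = J) by omega)]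
          ring
theorem stmt_10 (n : ℕ) (hn : 2 ≤ n) :
    ∃ P : Matrix (Fin (2 * n - 2)) (Fin (2 * n - 2)) ℚ, IsUnit P ∧
      P.transpose * (Mn n).map (Int.cast : ℤ → ℚ) * P =
        Matrix.diagonal (fun i : Fin (2 * n - 2) =>
          if (i : ℕ) < n - 2 then -(((i : ℕ) + 2 : ℚ)) / (((i : ℕ) + 1 : ℚ))
          else if (i : ℕ) < 2 * n - 4 then
            ((2 * n - 4 - (i : ℕ) : ℕ) : ℚ) / ((2 * n - 3 - (i : ℕ) : ℕ) : ℚ)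
          else if (i : ℕ) = 2 * n - 4 then -1 / 2
          else 2) := by
  classical
  have hfD : ∀ i : Fin (2 * n - 2),
      (if (i : ℕ) < n - 2 then -(((i : ℕ) + 2 : ℚ)) / (((i : ℕ) + 1 : ℚ))
        else if (i : ℕ) < 2 * n - 4 then
          ((2 * n - 4 - (i : ℕ) : ℕ) : ℚ) / ((2 * n - 3 - (i : ℕ) : ℕ) : ℚ)
        else if (i : ℕ) = 2 * n - 4 then -1 / 2
        else 2) = Df (n - 2) (i : ℕ) := by
    intro i
    have hi := i.isLt
    unfold Df
    by_cases h1 : (i : ℕ) < n - 2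
    · rw [if_pos h1, if_pos h1]
    · rw [if_neg h1, if_neg h1]
      by_cases h2 : (i : ℕ) < 2 * n - 4
      · rw [if_pos h2, if_pos (show (i : ℕ) < 2 * (n - 2) by omega)]
        have e1 : 2 * n - 4 - (i : ℕ) = 2 * (n - 2) - (i : ℕ) := by omega
        have e2 : 2 * n - 3 - (i : ℕ) = 2 * (n - 2) + 1 - (i : ℕ) := by omega
        rw [e1, e2, Nat.cast_sub (show (i : ℕ) ≤ 2 * (n - 2) by omega),
          Nat.cast_sub (show (i : ℕ) ≤ 2 * (n - 2) + 1 by omega)]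
        push_cast
        ring
      · rw [if_neg h2, if_neg (show ¬(i : ℕ) < 2 * (n - 2) by omega)]
        by_cases h3 : (i : ℕ) = 2 * n - 4
        · rw [if_pos h3, if_pos (show (i : ℕ) = 2 * (n - 2) by omega)]
        · rw [if_neg h3, if_neg (show ¬(i : ℕ) = 2 * (n - 2) by omega)]
  have hDne : ∀ i : Fin (2 * n - 2), Df (n - 2) (i : ℕ) ≠ 0 := by
    intro i
    have hi := i.isLt
    unfold Df
    split_ifs with h1 h2 h3
    · apply div_ne_zero
      · have hpos : (0 : ℚ) < ((i : ℕ) : ℚ) + 2 := by positivity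
        intro hcon
        rw [neg_eq_zero] at hcon
        linarith
      · positivity
    · have hc : ((i : ℕ) : ℚ) < 2 * ((n - 2 : ℕ) : ℚ) := by exact_mod_cast h2
      apply div_ne_zero
      · intro hcon; linarith
      · intro hcon; linarith
    · norm_num
    · norm_num
  have hprod : (Pm n).transpose * (Mn n).map (Int.cast : ℤ → ℚ) * Pm n =
      Matrix.diagonal (fun i : Fin (2 * n - 2) =>
        if (i : ℕ) < n - 2 then -(((i : ℕ) + 2 : ℚ)) / (((i : ℕ) + 1 : ℚ))
        else if (i : ℕ) < 2 * n - 4 then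
          ((2 * n - 4 - (i : ℕ) : ℕ) : ℚ) / ((2 * n - 3 - (i : ℕ) : ℕ) : ℚ)
        else if (i : ℕ) = 2 * n - 4 then -1 / 2
        else 2) := by
    rw [Matrix.mul_assoc]
    ext i j
    have hiN := i.isLt
    have hjN := j.isLt
    have hs : ∀ k : Fin (2 * n - 2),
        (Pm n).transpose i k * ((Mn n).map (Int.cast : ℤ → ℚ) * Pm n) k j
          = Qf (n - 2) (k : ℕ) (j : ℕ) * Pm n k i := by
      intro k
      rw [Matrix.transpose_apply, hMP hn k j, mul_comm]
    rw [Matrix.mul_apply, Finset.sum_congr rfl fun k _ => hs k]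
    have hRHS : Matrix.diagonal (fun i : Fin (2 * n - 2) =>
        if (i : ℕ) < n - 2 then -(((i : ℕ) + 2 : ℚ)) / (((i : ℕ) + 1 : ℚ))
        else if (i : ℕ) < 2 * n - 4 then
          ((2 * n - 4 - (i : ℕ) : ℕ) : ℚ) / ((2 * n - 3 - (i : ℕ) : ℕ) : ℚ)
        else if (i : ℕ) = 2 * n - 4 then -1 / 2
        else 2) i j = if (i : ℕ) = (j : ℕ) then Df (n - 2) (i : ℕ) else 0 := by
      rw [Matrix.diagonal_apply]
      by_cases hij : i = j
      · rw [if_pos hij, if_pos (show (i : ℕ) = (j : ℕ) by rw [hij])]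
        exact hfD i
      · rw [if_neg hij, if_neg (fun hc => hij (Fin.ext hc))]
    rw [hRHS]
    have hm2 := master2 (n - 2) (i : ℕ) (j : ℕ) (by omega) (by omega)
    by_cases hJ1 : (j : ℕ) = 2 * (n - 2) + 1
    · rw [if_pos hJ1] at hm2
      have hdec : ∀ k : Fin (2 * n - 2),
          Qf (n - 2) (k : ℕ) (j : ℕ) * Pm n k i
            = (if (k : ℕ) = 2 * (n - 2) then (-1 : ℚ) else 0) * Pm n k i
              + (if (k : ℕ) = 2 * (n - 2) + 1 then (2 : ℚ) else 0) * Pm n k i := by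
        intro k
        unfold Qf
        rw [if_pos hJ1]
        split_ifs <;> first | (exfalso; omega) | ring
      rw [Finset.sum_congr rfl fun k _ => hdec k, Finset.sum_add_distrib,
        sum_spike (fun l : Fin (2 * n - 2) => Pm n l i) (-1) (2 * (n - 2)),
        sum_spike (fun l : Fin (2 * n - 2) => Pm n l i) 2 (2 * (n - 2) + 1),
        dif_pos (show 2 * (n - 2) < 2 * n - 2 by omega),
        dif_pos (show 2 * (n - 2) + 1 < 2 * n - 2 by omega)]
      exact hm2
    · rw [if_neg hJ1] at hm2
      by_cases hJ2 : (j : ℕ) = 2 * (n - 2)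
      · rw [if_pos hJ2] at hm2
        have hdec : ∀ k : Fin (2 * n - 2),
            Qf (n - 2) (k : ℕ) (j : ℕ) * Pm n k i
              = (if (k : ℕ) = 2 * (n - 2) then (-1 / 2 : ℚ) else 0) * Pm n k i := by
          intro k
          unfold Qf
          rw [if_neg hJ1, if_pos hJ2]
        rw [Finset.sum_congr rfl fun k _ => hdec k,
          sum_spike (fun l : Fin (2 * n - 2) => Pm n l i) (-1 / 2) (2 * (n - 2)),
          dif_pos (show 2 * (n - 2) < 2 * n - 2 by omega)]
        exact hm2
      · rw [if_neg hJ2] at hm2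
        have hdec : ∀ k : Fin (2 * n - 2),
            Qf (n - 2) (k : ℕ) (j : ℕ) * Pm n k i
              = (if (k : ℕ) = (j : ℕ) then dQ (n - 2) (j : ℕ) else 0) * Pm n k i
                + (if (k : ℕ) = (j : ℕ) + 1 then bQ (n - 2) (j : ℕ) else 0) * Pm n k i := by
          intro k
          unfold Qf
          rw [if_neg hJ1, if_neg hJ2]
          split_ifs <;> first | (exfalso; omega) | ring
        rw [Finset.sum_congr rfl fun k _ => hdec k, Finset.sum_add_distrib,
          sum_spike (fun l : Fin (2 * n - 2) => Pm n l i) (dQ (n - 2) (j : ℕ)) (j : ℕ),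
          sum_spike (fun l : Fin (2 * n - 2) => Pm n l i) (bQ (n - 2) (j : ℕ)) ((j : ℕ) + 1),
          dif_pos (show (j : ℕ) < 2 * n - 2 from j.isLt),
          dif_pos (show (j : ℕ) + 1 < 2 * n - 2 by omega)]
        exact hm2
  refine ⟨Pm n, ?_, hprod⟩
  have hdet := congrArg Matrix.det hprod
  rw [Matrix.det_mul, Matrix.det_mul, Matrix.det_transpose, Matrix.det_diagonal] at hdet
  have hne : (∏ i : Fin (2 * n - 2),
      (if (i : ℕ) < n - 2 then -(((i : ℕ) + 2 : ℚ)) / (((i : ℕ) + 1 : ℚ))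
        else if (i : ℕ) < 2 * n - 4 then
          ((2 * n - 4 - (i : ℕ) : ℕ) : ℚ) / ((2 * n - 3 - (i : ℕ) : ℕ) : ℚ)
        else if (i : ℕ) = 2 * n - 4 then -1 / 2
        else 2)) ≠ 0 := by
    rw [Finset.prod_ne_zero_iff]
    intro i _
    rw [hfD i]
    exact hDne i
  apply (Matrix.isUnit_iff_isUnit_det _).2
  rw [isUnit_iff_ne_zero]
  intro h0
  rw [h0, mul_zero] at hdet
  exact hne hdet.symm
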